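/- Let S be an ergodic invertible measure-preserving transformation of a probability space (X, μ) and f : X → ℤ an integrable function with ∫ f dμ = 0. Then the cylindrical cascade (x, a) ↦ (S(x), a + f(x)) on X × ℤ is conservative; equivalently, for almost every x ∈ X, the set of natural numbers N with ∑_{n=0}^{N−1} f(Sⁿ(x)) = 0 is infinite. -/

import Mathlib

open MeasureTheory Filter Set Topology

section Maximal
variable {X : Type*} [MeasurableSpace X]

/-- `maxS T g N x = max_{0 ≤ n ≤ N} birkhoffSum T g n x`, defined recursively. -/
noncomputable def maxS (T : X → X) (g : X → ℝ) : ℕ → X → ℝ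
  | 0 => fun _ => 0
  | (N+1) => fun x => max 0 (g x + maxS T g N (T x))

variable {T : X → X} {g : X → ℝ}

lemma maxS_nonneg (N : ℕ) (x : X) : 0 ≤ maxS T g N x := by
  cases N with
  | zero => exact le_refl _
  | succ N => exact le_max_left _ _

lemma maxS_mono (N : ℕ) (x : X) : maxS T g N x ≤ maxS T g (N+1) x := by
  induction N generalizing x with
  | zero => exact maxS_nonneg 1 x
  | succ N ih =>
    exact max_le (le_max_left _ _)
      (le_max_of_le_right (by gcongr; exact ih (T x)))

lemma birkhoffSum_le_maxS {n N : ℕ} (h : n ≤ N) (x : X) :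
    birkhoffSum T g n x ≤ maxS T g N x := by
  induction N generalizing n x with
  | zero => simp [Nat.le_zero.mp h, birkhoffSum_zero, maxS]
  | succ N ih =>
    cases n with
    | zero => simpa [birkhoffSum_zero] using maxS_nonneg (N+1) x
    | succ n =>
      rw [birkhoffSum_succ']
      exact le_max_of_le_right (by gcongr; exact ih (Nat.succ_le_succ_iff.mp h) (T x))

lemma maxS_measurable (hT : Measurable T) (hg : Measurable g) (N : ℕ) :
    Measurable (maxS T g N) := by
  induction N with
  | zero => exact measurable_const
  | succ N ih => exact measurable_const.max (hg.add (ih.comp hT))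

end Maximal

section Max2
variable {X : Type*} [MeasurableSpace X] {μ : Measure X} {T : X → X} {g : X → ℝ}

lemma maxS_integrable (hT : MeasurePreserving T μ μ) (hg : Measurable g)
    (hgi : Integrable g μ) (N : ℕ) : Integrable (maxS T g N) μ := by
  induction N with
  | zero => exact integrable_zero _ _ _
  | succ N ih =>
    have h1 : Integrable (fun x => g x + maxS T g N (T x)) μ :=
      hgi.add ((hT.integrable_comp
        (maxS_measurable hT.measurable hg N).aestronglyMeasurable).mpr ih)
    have h2 := h1.pos_part
    have : (fun x => max (g x + maxS T g N (T x)) 0) = maxS T g (N+1) := by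
      funext x; exact max_comm _ _
    rwa [this] at h2

lemma integral_comp_eq (hT : MeasurePreserving T μ μ) {h : X → ℝ} (hm : Measurable h) :
    ∫ x, h (T x) ∂μ = ∫ x, h x ∂μ := by
  rw [← integral_map hT.measurable.aemeasurable hm.aestronglyMeasurable, hT.map_eq]

/-- Maximal ergodic theorem (Garsia's proof). -/
lemma maximal_ergodic (hT : MeasurePreserving T μ μ) (hg : Measurable g)
    (hgi : Integrable g μ) (N : ℕ) :
    0 ≤ ∫ x in {x | 0 < maxS T g N x}, g x ∂μ := by
  cases N with
  | zero =>
    have : {x : X | 0 < maxS T g 0 x} = ∅ := by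
      ext x; simp [maxS]
    simp [this]
  | succ N =>
    set P : Set X := {x | 0 < maxS T g (N+1) x} with hP
    have hPm : MeasurableSet P :=
      measurableSet_lt measurable_const (maxS_measurable hT.measurable hg (N+1))
    have hMm : Measurable (maxS T g (N+1)) := maxS_measurable hT.measurable hg (N+1)
    have hMi : Integrable (maxS T g (N+1)) μ := maxS_integrable hT hg hgi (N+1)
    have hMTi : Integrable (fun x => maxS T g (N+1) (T x)) μ :=
      (hT.integrable_comp hMm.aestronglyMeasurable).mpr hMi
    -- key pointwise inequality on P
    have key : ∀ x ∈ P, maxS T g (N+1) x - maxS T g (N+1) (T x) ≤ g x := by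
      intro x hx
      have hx' : 0 < maxS T g (N+1) x := hx
      have heq : maxS T g (N+1) x = g x + maxS T g N (T x) := by
        have hd : maxS T g (N+1) x = max 0 (g x + maxS T g N (T x)) := rfl
        rw [hd] at hx' ⊢
        have hpos : 0 < g x + maxS T g N (T x) :=
          ((lt_max_iff.mp hx').resolve_left (lt_irrefl 0))
        exact max_eq_right hpos.le
      rw [heq]
      have := maxS_mono (T := T) (g := g) N (T x)
      linarith
    have h1 : ∫ x in P, (maxS T g (N+1) x - maxS T g (N+1) (T x)) ∂μ ≤ ∫ x in P, g x ∂μ :=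
      setIntegral_mono_on (hMi.sub hMTi).integrableOn hgi.integrableOn hPm key
    have h2 : ∫ x in P, (maxS T g (N+1) x - maxS T g (N+1) (T x)) ∂μ
        = ∫ x in P, maxS T g (N+1) x ∂μ - ∫ x in P, maxS T g (N+1) (T x) ∂μ :=
      integral_sub hMi.integrableOn hMTi.integrableOn
    have h3 : ∫ x in P, maxS T g (N+1) x ∂μ = ∫ x, maxS T g (N+1) x ∂μ := by
      refine setIntegral_eq_integral_of_forall_compl_eq_zero fun x hx => ?_
      have h0 := maxS_nonneg (T := T) (g := g) (N+1) x
      have : ¬ 0 < maxS T g (N+1) x := hx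
      linarith
    have h4 : ∫ x in P, maxS T g (N+1) (T x) ∂μ ≤ ∫ x, maxS T g (N+1) (T x) ∂μ :=
      setIntegral_le_integral hMTi (Eventually.of_forall fun x => maxS_nonneg _ _)
    have h5 : ∫ x, maxS T g (N+1) (T x) ∂μ = ∫ x, maxS T g (N+1) x ∂μ :=
      integral_comp_eq hT hMm
    linarith

end Max2

section OneSided
variable {X : Type*} [MeasurableSpace X] {μ : Measure X} {T : X → X} {g : X → ℝ}

/-- The set of points whose Birkhoff sums exceed `c * n` infinitely often. -/
def Bset (T : X → X) (g : X → ℝ) (c : ℝ) : Set X :=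
  {x | ∀ N : ℕ, ∃ n, N ≤ n ∧ c * n < birkhoffSum T g n x}

lemma birkhoffSum_measurable (hT : Measurable T) (hg : Measurable g) (n : ℕ) :
    Measurable (birkhoffSum T g n) := by
  apply Finset.measurable_sum
  intro k _
  exact hg.comp (hT.iterate k)

lemma bset_measurable (hT : Measurable T) (hg : Measurable g) (c : ℝ) :
    MeasurableSet (Bset T g c) := by
  have : Bset T g c = ⋂ N : ℕ, ⋃ n : ℕ, ⋃ (_ : N ≤ n),
      {x | c * n < birkhoffSum T g n x} := by
    ext x; simp [Bset]
  rw [this]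
  exact MeasurableSet.iInter fun N => MeasurableSet.iUnion fun n =>
    MeasurableSet.iUnion fun _ =>
      measurableSet_lt measurable_const (birkhoffSum_measurable hT hg n)

lemma bset_antitone {c c' : ℝ} (h : c' ≤ c) : Bset T g c ⊆ Bset T g c' := by
  intro x hx N
  obtain ⟨n, hn, hlt⟩ := hx N
  exact ⟨n, hn, lt_of_le_of_lt (mul_le_mul_of_nonneg_right h n.cast_nonneg) hlt⟩

lemma preimage_bset_subset {p q : ℝ} (hpq : p < q) :
    T ⁻¹' (Bset T g q) ⊆ Bset T g p := by
  intro x hx N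
  obtain ⟨n, hn, hlt⟩ := hx (max N ⌈(p - g x) / (q - p)⌉₊)
  refine ⟨n + 1, le_trans (le_trans (le_max_left _ _) hn) (Nat.le_succ n), ?_⟩
  rw [birkhoffSum_succ']
  have hqp : (0:ℝ) < q - p := by linarith
  have h1 : ((p - g x) / (q - p)) ≤ (n : ℝ) := by
    calc ((p - g x) / (q - p)) ≤ (⌈(p - g x) / (q - p)⌉₊ : ℝ) := Nat.le_ceil _
    _ ≤ n := by exact_mod_cast le_trans (le_max_right _ _) hn
  have h2 : p - g x ≤ (n : ℝ) * (q - p) := by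
    rw [div_le_iff₀ hqp] at h1; linarith
  push_cast
  nlinarith
lemma bset_subset_preimage {p q : ℝ} (hpq : p < q) :
    Bset T g q ⊆ T ⁻¹' (Bset T g p) := by
  intro x hx N
  obtain ⟨n, hn, hlt⟩ := hx (max (N + 1) (max 1 ⌈(g x - p) / (q - p)⌉₊))
  have hn1 : 1 ≤ n := le_trans (le_trans (le_max_left _ _) (le_max_right _ _)) hn
  obtain ⟨m, rfl⟩ : ∃ m, n = m + 1 := ⟨n - 1, (Nat.succ_pred_eq_of_pos hn1).symm⟩
  have hNm : N ≤ m := by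
    have := le_trans (le_max_left _ _) hn; omega
  refine ⟨m, hNm, ?_⟩
  rw [birkhoffSum_succ'] at hlt
  have hqp : (0:ℝ) < q - p := by linarith
  have h1 : ((g x - p) / (q - p)) ≤ ((m+1 : ℕ) : ℝ) := by
    calc ((g x - p) / (q - p)) ≤ (⌈(g x - p) / (q - p)⌉₊ : ℝ) := Nat.le_ceil _
    _ ≤ ((m+1 : ℕ) : ℝ) := by
        exact_mod_cast le_trans (le_trans (le_max_right _ _) (le_max_right _ _)) hn
  have h2 : g x - p ≤ ((m+1:ℕ) : ℝ) * (q - p) := by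
    rw [div_le_iff₀ hqp] at h1; linarith
  push_cast at h2 hlt ⊢
  nlinarith

end OneSided

section AE
variable {X : Type*} [MeasurableSpace X] {μ : Measure X} [IsProbabilityMeasure μ]
variable {T : X → X} {g : X → ℝ}

lemma birkhoffSum_sub_const (c : ℝ) (n : ℕ) (x : X) :
    birkhoffSum T (fun y => g y - c) n x = birkhoffSum T g n x - n * c := by
  simp [birkhoffSum, Finset.sum_sub_distrib, mul_comm]

/-- One-sided Birkhoff bound: if `∫ g = 0` then a.e. the Birkhoff sums
eventually stay below `c * n` for each `c > 0`. -/
lemma ae_eventually_birkhoffSum_le (hT : Ergodic T μ) (hg : Measurable g)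
    (hgi : Integrable g μ) (hg0 : ∫ x, g x ∂μ = 0) {c : ℝ} (hc : 0 < c) :
    ∀ᵐ x ∂μ, ∀ᶠ n in atTop, birkhoffSum T g n x ≤ c * n := by
  set c' : ℝ := c / 2 with hc'
  have hc'pos : 0 < c' := by positivity
  have hc'c : c' < c := by simp [hc']; linarith
  -- the invariant set
  set C : Set X := ⋃ (q : ℚ) (_ : c' < (q : ℝ)), Bset T g q with hC
  have hCm : MeasurableSet C :=
    MeasurableSet.iUnion fun q => MeasurableSet.iUnion fun _ =>
      bset_measurable hT.measurable hg _
  have hCinv : T ⁻¹' C = C := by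
    apply Set.Subset.antisymm
    · intro x hx
      simp only [hC, Set.mem_preimage, Set.mem_iUnion] at hx ⊢
      obtain ⟨q, hq, hxq⟩ := hx
      obtain ⟨p, hp1, hp2⟩ := exists_rat_btwn (show c' < (q:ℝ) from hq)
      exact ⟨p, hp1, preimage_bset_subset (by exact_mod_cast hp2) hxq⟩
    · intro x hx
      simp only [hC, Set.mem_preimage, Set.mem_iUnion] at hx ⊢
      obtain ⟨q, hq, hxq⟩ := hx
      obtain ⟨p, hp1, hp2⟩ := exists_rat_btwn (show c' < (q:ℝ) from hq)
      exact ⟨p, hp1, bset_subset_preimage (by exact_mod_cast hp2) hxq⟩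
  have hC01 := hT.ae_empty_or_univ hCm hCinv
  -- rule out full measure
  have hCne : ¬ (C =ᵐ[μ] (Set.univ : Set X)) := by
    intro hfull
    -- C ⊆ Bset T g c' ⊆ ⋃ N, {0 < maxS T (g - c') N}
    set h : X → ℝ := fun y => g y - c' with hh
    have hhm : Measurable h := hg.sub measurable_const
    have hhi : Integrable h μ := hgi.sub (integrable_const c')
    set P : ℕ → Set X := fun N => {x | 0 < maxS T h N x} with hPdef
    have hPm : ∀ N, MeasurableSet (P N) := fun N =>
      measurableSet_lt measurable_const (maxS_measurable hT.measurable hhm N)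
    have hPmono : Monotone P := by
      intro a b hab x hx
      have : maxS T h a x ≤ maxS T h b x := by
        clear hx
        induction b with
        | zero => simp_all
        | succ b ih =>
          rcases Nat.lt_or_ge a (b+1) with h1 | h1
          · exact le_trans (ih (by omega)) (maxS_mono b x)
          · have : a = b + 1 := by omega
            subst this; rfl
      exact lt_of_lt_of_le hx this
    have hsub : C ⊆ ⋃ N, P N := by
      intro x hx
      simp only [hC, Set.mem_iUnion] at hx
      obtain ⟨q, hq, hxq⟩ := hx
      have hxc' : x ∈ Bset T g c' := bset_antitone hq.le hxq
      obtain ⟨n, hn1, hlt⟩ := hxc' 1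
      refine Set.mem_iUnion.mpr ⟨n, ?_⟩
      have : 0 < birkhoffSum T h n x := by
        rw [hh, birkhoffSum_sub_const]
        have : c' * n < birkhoffSum T g n x := hlt
        linarith [this, mul_comm c' (n:ℝ)]
      exact lt_of_lt_of_le this (birkhoffSum_le_maxS le_rfl x)
    have hUc : μ (⋃ N, P N)ᶜ = 0 := by
      have h1 : μ Cᶜ = 0 := by
        have : μ C = 1 := by
          rw [measure_congr hfull, measure_univ]
        rw [measure_compl hCm (by simp [this]), this, measure_univ]
        simp
      exact measure_mono_null (Set.compl_subset_compl.mpr hsub) h1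
    have htend : Tendsto (fun N => ∫ x in P N, h x ∂μ) atTop
        (𝓝 (∫ x in ⋃ N, P N, h x ∂μ)) :=
      tendsto_setIntegral_of_monotone hPm hPmono hhi.integrableOn
    have hlim : ∫ x in ⋃ N, P N, h x ∂μ = ∫ x, h x ∂μ := by
      apply setIntegral_eq_integral_of_ae_compl_eq_zero
      have : ∀ᵐ x ∂μ, x ∈ ⋃ N, P N := by
        rw [MeasureTheory.ae_iff]
        rw [Set.compl_iUnion] at hUc
        convert hUc using 2
        ext y; simp
      filter_upwards [this] with x hx hx'
      exact absurd hx hx'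
    have hneg : ∫ x, h x ∂μ = -c' := by
      rw [hh]
      rw [integral_sub hgi (integrable_const c'), hg0, integral_const]
      simp
    have hge : (0:ℝ) ≤ ∫ x in ⋃ N, P N, h x ∂μ :=
      ge_of_tendsto htend (Eventually.of_forall fun N =>
        maximal_ergodic hT.toMeasurePreserving hhm hhi N)
    rw [hlim, hneg] at hge
    linarith
  have hC0 : μ C = 0 := by
    rcases hC01 with h | h
    · simpa using measure_congr h
    · exact absurd h hCne
  -- Bset T g c ⊆ C
  obtain ⟨q, hq1, hq2⟩ := exists_rat_btwn hc'c
  have hBC : Bset T g c ⊆ C := by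
    intro x hx
    exact Set.mem_iUnion.mpr ⟨q, Set.mem_iUnion.mpr ⟨hq1, bset_antitone hq2.le hx⟩⟩
  have hB0 : μ (Bset T g c) = 0 := measure_mono_null hBC hC0
  have : ∀ᵐ x ∂μ, x ∉ Bset T g c := by
    rw [MeasureTheory.ae_iff]; simpa using hB0
  filter_upwards [this] with x hx
  simp only [Bset, Set.mem_setOf_eq, not_forall] at hx
  obtain ⟨N, hN⟩ := hx
  rw [eventually_atTop]
  exact ⟨N, fun n hn => by
    by_contra hcon
    push_neg at hcon
    exact hN ⟨n, hn, hcon⟩⟩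

end AE

section Atkinson
variable {X : Type*} [MeasurableSpace X] {μ : Measure X} [IsProbabilityMeasure μ]
variable {S : X → X} {f' : X → ℤ}

lemma cast_birkhoffSum (f' : X → ℤ) (S : X → X) (n : ℕ) (y : X) :
    ((birkhoffSum S f' n y : ℤ) : ℝ) = birkhoffSum S (fun x => ((f' x : ℤ) : ℝ)) n y := by
  simp [birkhoffSum]

/-- The set of points whose integer Birkhoff sums never return to zero is null. -/
lemma noreturn_null (hS : Ergodic S μ) (hf'm : Measurable f')
    (hf'i : Integrable (fun x => ((f' x : ℤ) : ℝ)) μ)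
    (hf'0 : ∫ x, ((f' x : ℤ) : ℝ) ∂μ = 0) :
    μ {x | ∀ n : ℕ, 1 ≤ n → birkhoffSum S f' n x ≠ 0} = 0 := by
  classical
  set G : X → ℝ := fun x => ((f' x : ℤ) : ℝ) with hG
  have hGm : Measurable G := measurable_from_top.comp hf'm
  set D : Set X := {x | ∀ n : ℕ, 1 ≤ n → birkhoffSum S f' n x ≠ 0} with hD
  have hDm : MeasurableSet D := by
    have : D = ⋂ n : ℕ, ⋂ (_ : 1 ≤ n), {x | birkhoffSum S f' n x ≠ 0} := by
      ext x; simp [hD]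
    rw [this]
    refine MeasurableSet.iInter fun n => MeasurableSet.iInter fun _ => ?_
    have : Measurable (birkhoffSum S f' n) :=
      Finset.measurable_sum _ fun k _ => hf'm.comp (hS.measurable.iterate k)
    exact (MeasurableSet.singleton (0:ℤ)).preimage this |>.compl
  by_contra hμD
  set d : ℝ := (μ D).toReal with hd
  have hdpos : 0 < d := by
    rw [hd, ENNReal.toReal_pos_iff]
    exact ⟨pos_iff_ne_zero.mpr hμD, lt_of_le_of_lt prob_le_one ENNReal.one_lt_top⟩
  set ε : ℝ := d / 4 with hε
  have hεpos : 0 < ε := by positivity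
  -- indicator of D
  set ind : X → ℝ := D.indicator (fun _ => 1) with hind
  have hindm : Measurable ind := (measurable_const (a := (1:ℝ))).indicator hDm
  have hindi : Integrable ind μ := (integrable_const (1:ℝ)).indicator hDm
  have hindint : ∫ x, ind x ∂μ = d := by
    rw [hind, integral_indicator_const _ hDm]; simp [hd, Measure.real]
  -- three a.e. facts
  have h1 := ae_eventually_birkhoffSum_le hS hGm hf'i hf'0 hεpos
  have h2 : ∀ᵐ x ∂μ, ∀ᶠ n in atTop, birkhoffSum S (fun y => -G y) n x ≤ ε * n :=
    ae_eventually_birkhoffSum_le hS hGm.neg hf'i.neg (by simp only [Pi.neg_apply]; rw [integral_neg, hf'0]; simp) hεpos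
  have h3 : ∀ᵐ x ∂μ, ∀ᶠ n in atTop, birkhoffSum S (fun y => d - ind y) n x ≤ ε * n := by
    refine ae_eventually_birkhoffSum_le hS (measurable_const.sub hindm)
      ((integrable_const d).sub hindi) ?_ hεpos
    simp only [Pi.sub_apply]
    rw [integral_sub (integrable_const d) hindi, hindint, integral_const]; simp
  obtain ⟨x, hx1, hx2, hx3⟩ := (h1.and (h2.and h3)).exists
  rw [eventually_atTop] at hx1 hx2 hx3
  obtain ⟨a1, ha1⟩ := hx1; obtain ⟨a2, ha2⟩ := hx2; obtain ⟨a3, ha3⟩ := hx3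
  set n₀ : ℕ := max a1 (max a2 a3) with hn₀
  -- choose N large
  set N : ℕ := max (max n₀ 1) ⌈((n₀:ℝ) + 2) / ε⌉₊ with hN
  have hNn₀ : n₀ ≤ N := le_trans (le_max_left _ _) (le_max_left _ _)
  have hN1 : 1 ≤ N := le_trans (le_max_right _ _) (le_max_left _ _)
  have hNε : (n₀ : ℝ) + 2 ≤ ε * N := by
    have h' : ((n₀:ℝ) + 2) / ε ≤ (⌈((n₀:ℝ) + 2) / ε⌉₊ : ℝ) := Nat.le_ceil _
    have h'' : (⌈((n₀:ℝ) + 2) / ε⌉₊ : ℝ) ≤ (N : ℝ) := by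
      have : ⌈((n₀:ℝ) + 2) / ε⌉₊ ≤ N := le_max_right _ _
      exact_mod_cast this
    rw [div_le_iff₀ hεpos] at h'
    nlinarith
  -- the visit set
  set I : Finset ℕ := (Finset.range N).filter (fun n => S^[n] x ∈ D) with hI
  -- lower bound on I.card
  have hcard_eq : (I.card : ℝ) = birkhoffSum S ind N x := by
    rw [hI, birkhoffSum, Finset.card_filter]
    rw [hind]
    push_cast
    refine Finset.sum_congr rfl fun n _ => ?_
    by_cases h : S^[n] x ∈ D <;> simp [h, Set.indicator_apply]
  have hlow : (d - ε) * N ≤ (I.card : ℝ) := by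
    have := ha3 N (le_trans (le_trans (le_max_right _ _) (le_max_right _ _)) hNn₀)
    have hsum : birkhoffSum S (fun y => d - ind y) N x = N * d - birkhoffSum S ind N x := by
      simp [birkhoffSum, Finset.sum_sub_distrib, mul_comm]
    rw [hsum] at this
    rw [hcard_eq]
    nlinarith [this]
  -- upper bound on I.card via injectivity
  set I' : Finset ℕ := I.filter (fun n => n₀ ≤ n) with hI'
  have hinj : Set.InjOn (fun n => birkhoffSum S f' n x) I := by
    intro n hn m hm hnm
    by_contra hne
    rcases Nat.lt_or_ge n m with hlt | hge
    · -- n < m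
      have hmem : S^[n] x ∈ D := (Finset.mem_filter.mp hn).2
      have : birkhoffSum S f' (m - n) (S^[n] x) = 0 := by
        have hadd := birkhoffSum_add S f' n (m - n) x
        rw [Nat.add_sub_cancel' hlt.le] at hadd
        simp only at hnm
        omega
      exact hmem (m - n) (by omega) this
    · have hlt : m < n := by omega
      have hmem : S^[m] x ∈ D := (Finset.mem_filter.mp hm).2
      have : birkhoffSum S f' (n - m) (S^[m] x) = 0 := by
        have hadd := birkhoffSum_add S f' m (n - m) x
        rw [Nat.add_sub_cancel' hlt.le] at hadd
        simp only at hnm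
        omega
      exact hmem (n - m) (by omega) this
  -- members of I' map into a small interval of integers
  set M : ℤ := ⌊ε * N⌋ with hM
  have hMnn : (0:ℤ) ≤ M := Int.floor_nonneg.mpr (by positivity)
  have hmaps : ∀ n ∈ I', birkhoffSum S f' n x ∈ Finset.Icc (-M) M := by
    intro n hn
    have hn₀n : n₀ ≤ n := (Finset.mem_filter.mp hn).2
    have hnN : n < N := Finset.mem_range.mp (Finset.mem_filter.mp ((Finset.mem_filter.mp hn).1)).1
    have hb1 : birkhoffSum S G n x ≤ ε * n :=
      ha1 n (le_trans (le_max_left _ _) hn₀n)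
    have hb2 : -(birkhoffSum S G n x) ≤ ε * n := by
      have := ha2 n (le_trans (le_trans (le_max_left _ _) (le_max_right _ _)) hn₀n)
      have hneg : birkhoffSum S (fun y => -G y) n x = -(birkhoffSum S G n x) := by
        simp [birkhoffSum]
      linarith [this, hneg ▸ this]
    have hnN' : ε * n ≤ ε * N := by
      have : (n:ℝ) ≤ N := by exact_mod_cast hnN.le
      nlinarith
    have hcast : ((birkhoffSum S f' n x : ℤ) : ℝ) = birkhoffSum S G n x :=
      cast_birkhoffSum f' S n x
    rw [Finset.mem_Icc]
    constructor
    · rw [neg_le, hM]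
      refine Int.le_floor.mpr ?_
      push_cast
      rw [hcast]
      linarith
    · rw [hM, Int.le_floor]
      rw [← hcast] at hb1
      linarith
  have hupI' : (I'.card : ℝ) ≤ 2 * (ε * N) + 1 := by
    have hc1 : I'.card ≤ (Finset.Icc (-M) M).card :=
      Finset.card_le_card_of_injOn _ hmaps (hinj.mono (by
        intro n hn
        exact (Finset.mem_filter.mp hn).1))
    have hc2 : (Finset.Icc (-M) M).card = (2 * M + 1).toNat := by
      rw [Int.card_Icc]
      congr 1
      omega
    have hfloor : (M : ℝ) ≤ ε * N := Int.floor_le _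
    have : ((2 * M + 1).toNat : ℝ) = 2 * (M:ℝ) + 1 := by
      have h0 : (0:ℤ) ≤ 2 * M + 1 := by omega
      have h1 : (((2 * M + 1).toNat : ℤ) : ℝ) = 2 * (M:ℝ) + 1 := by
        rw [Int.toNat_of_nonneg h0]; push_cast; ring
      exact_mod_cast h1
    calc (I'.card : ℝ) ≤ ((Finset.Icc (-M) M).card : ℝ) := by exact_mod_cast hc1
      _ = 2 * (M:ℝ) + 1 := by rw [hc2]; exact this
      _ ≤ 2 * (ε * N) + 1 := by linarith
  have hIsplit : (I.card : ℝ) ≤ n₀ + ((2 : ℝ) * (ε * N) + 1) := by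
    have hsub : I ⊆ Finset.range n₀ ∪ I' := by
      intro n hn
      rcases Nat.lt_or_ge n n₀ with h | h
      · exact Finset.mem_union_left _ (Finset.mem_range.mpr h)
      · exact Finset.mem_union_right _ (Finset.mem_filter.mpr ⟨hn, h⟩)
    have := Finset.card_le_card hsub
    have h2 := Finset.card_union_le (Finset.range n₀) I'
    have : I.card ≤ n₀ + I'.card := by
      simpa [Finset.card_range] using le_trans this h2
    calc (I.card : ℝ) ≤ (n₀ : ℝ) + I'.card := by exact_mod_cast this
      _ ≤ n₀ + (2 * (ε * N) + 1) := by linarith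
  -- contradiction
  have hNr : (1:ℝ) ≤ N := by exact_mod_cast hN1
  have hd4 : d = 4 * ε := by rw [hε]; ring
  nlinarith [hlow, hIsplit, hNε, hNr]

end Atkinson

theorem stmt8 {X : Type*} [MeasurableSpace X] (μ : Measure X) [IsProbabilityMeasure μ]
    (S : X → X) (hSbij : Function.Bijective S) (hS : Ergodic S μ)
    (f : X → ℤ) (hf : Integrable (fun x => (f x : ℝ)) μ)
    (hf0 : ∫ x, (f x : ℝ) ∂μ = 0) :
    ∀ᵐ x ∂μ, {N : ℕ | ∑ n ∈ Finset.range N, f (S^[n] x) = 0}.Infinite := by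
  -- replace f by a measurable representative f'
  obtain ⟨g₀, hg₀m, hg₀eq⟩ : ∃ g₀ : X → ℝ, Measurable g₀ ∧ (fun x => (f x : ℝ)) =ᵐ[μ] g₀ :=
    ⟨hf.1.mk _, hf.1.stronglyMeasurable_mk.measurable, hf.1.ae_eq_mk⟩
  set f' : X → ℤ := fun x => ⌊g₀ x + 2⁻¹⌋ with hf'def
  have hf'm : Measurable f' := (hg₀m.add measurable_const).floor
  have hff' : (fun x => f x) =ᵐ[μ] f' := by
    filter_upwards [hg₀eq] with x hx
    have : g₀ x = ((f x : ℤ) : ℝ) := hx.symm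
    rw [hf'def]
    simp only [this]
    rw [add_comm, Int.floor_add_intCast]
    have : ⌊(2⁻¹ : ℝ)⌋ = 0 := by
      rw [Int.floor_eq_zero_iff]; constructor <;> norm_num
    rw [this, zero_add]
  have hGf : (fun x => (f x : ℝ)) =ᵐ[μ] (fun x => ((f' x : ℤ) : ℝ)) := by
    filter_upwards [hff'] with x hx
    exact_mod_cast congrArg (fun z : ℤ => (z : ℝ)) hx
  have hf'i : Integrable (fun x => ((f' x : ℤ) : ℝ)) μ := hf.congr hGf
  have hf'0 : ∫ x, ((f' x : ℤ) : ℝ) ∂μ = 0 := by rw [← integral_congr_ae hGf]; exact hf0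
  set D : Set X := {x | ∀ n : ℕ, 1 ≤ n → birkhoffSum S f' n x ≠ 0} with hD
  have hDm : MeasurableSet D := by
    have : D = ⋂ n : ℕ, ⋂ (_ : 1 ≤ n), {x | birkhoffSum S f' n x ≠ 0} := by
      ext x; simp [hD]
    rw [this]
    refine MeasurableSet.iInter fun n => MeasurableSet.iInter fun _ => ?_
    have : Measurable (birkhoffSum S f' n) :=
      Finset.measurable_sum _ fun k _ => hf'm.comp (hS.measurable.iterate k)
    exact (MeasurableSet.singleton (0:ℤ)).preimage this |>.compl
  have hD0 : μ D = 0 := noreturn_null hS hf'm hf'i hf'0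
  -- a.e. facts
  have hA : ∀ᵐ x ∂μ, ∀ k : ℕ, S^[k] x ∉ D := by
    rw [ae_all_iff]
    intro k
    have : {x | ¬ S^[k] x ∉ D} = S^[k] ⁻¹' D := by ext y; simp
    rw [MeasureTheory.ae_iff, this, (hS.toMeasurePreserving.iterate k).measure_preimage hDm.nullMeasurableSet]
    exact hD0
  have hB : ∀ᵐ x ∂μ, ∀ j : ℕ, f (S^[j] x) = f' (S^[j] x) := by
    rw [ae_all_iff]
    intro j
    have hbad : μ {y | ¬ f y = f' y} = 0 := MeasureTheory.ae_iff.mp hff'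
    have hsub : {x | ¬ f (S^[j] x) = f' (S^[j] x)} = S^[j] ⁻¹' {y | ¬ f y = f' y} := by
      ext y; simp
    rw [MeasureTheory.ae_iff, hsub]
    exact ((hS.toMeasurePreserving.iterate j).quasiMeasurePreserving).preimage_null hbad
  filter_upwards [hA, hB] with x hAx hBx
  -- sums with f and f' agree along the orbit of x
  have hsum : ∀ n N : ℕ, birkhoffSum S f n (S^[N] x) = birkhoffSum S f' n (S^[N] x) := by
    intro n N
    refine Finset.sum_congr rfl fun k _ => ?_
    rw [← Function.iterate_add_apply, hBx (k + N), Function.iterate_add_apply]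
  have hsum0 : ∀ n : ℕ, birkhoffSum S f n x = birkhoffSum S f' n x := by
    intro n
    have := hsum n 0
    simpa using this
  -- unboundedness of the return set
  have hclaim : ∀ k : ℕ, ∃ N : ℕ, k ≤ N ∧ birkhoffSum S f N x = 0 := by
    intro k
    induction k with
    | zero => exact ⟨0, le_refl 0, birkhoffSum_zero S f x⟩
    | succ k ih =>
      obtain ⟨N, hkN, hN0⟩ := ih
      have hnotD : S^[N] x ∉ D := hAx N
      simp only [hD, Set.mem_setOf_eq, not_forall, Classical.not_imp, not_not] at hnotD
      obtain ⟨m, hm1, hm0⟩ := hnotD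
      refine ⟨N + m, by omega, ?_⟩
      rw [birkhoffSum_add, hN0, zero_add, hsum m N, hm0]
  -- conclude infiniteness
  have hset : {N : ℕ | ∑ n ∈ Finset.range N, f (S^[n] x) = 0}
      = {N : ℕ | birkhoffSum S f N x = 0} := rfl
  rw [hset]
  by_contra hfin
  rw [Set.not_infinite] at hfin
  obtain ⟨b, hb⟩ := hfin.bddAbove
  obtain ⟨N, hbN, hN0⟩ := hclaim (b + 1)
  have : N ≤ b := hb hN0
  omega
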